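/- Under the stated assumptions, for every a ∈ (0, 1/2) the following holds for all sufficiently large N: if for each I ∈ 𝓘^N the interval I is partitioned into consecutive subintervals J_1^I, …, J_{r_I}^I with summ(J_k^I) ≤ 1/2 for every k, and with #{(n,n') ∈ J_k^I × J_{k+1}^I : g_n + ⋯ + g_{n'} > 1/2} ≥ (1/2)·min(|J_k^I|, |J_{k+1}^I|)² for every 1 ≤ k ≤ r_I − 1, then ∑_{I ∈ 𝓘^N} ∑_{k=1}^{r_I − 1} PPC^{J_k^I, J_{k+1}^I}(0, a) ≤ 2√2 · ε^{1/4} · (∑_{I ∈ 𝓘^N} ∑_{k=1}^{r_I} |J_k^I|²)^{1/2} · √N. -/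

import Mathlib

open Finset Filter

open scoped Classical
set_option maxRecDepth 8000
set_option maxHeartbeats 1000000

private lemma ev_succ {P : ℕ → Prop} (h : ∀ᶠ M in atTop, P M) :
    ∀ᶠ N : ℕ in atTop, P (N + 1) :=
  (tendsto_add_atTop_nat 1).eventually h

private noncomputable def pset (lam : ℕ → ℝ) (x y : ℝ) (M : ℕ) : Finset (ℕ × ℕ) :=
  (Finset.Icc 1 M ×ˢ Finset.Icc 1 M).filter
    (fun p => p.1 ≠ p.2 ∧ lam p.2 - lam p.1 ∈ Set.Ioc x y)

private noncomputable def pcnt (lam : ℕ → ℝ) (x y : ℝ) (M : ℕ) : ℕ := (pset lam x y M).card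

private lemma mi_disj (g : ℕ → ℝ) (N : ℕ) {pq pq' : ℕ × ℕ}
    (h1 : pq ∈ (Finset.Icc 1 N ×ˢ Finset.Icc 1 N).filter (fun pq =>
      pq.1 ≤ pq.2 ∧ (∀ n ∈ Finset.Icc pq.1 pq.2, g n ≤ 1 / 2) ∧
      (pq.1 = 1 ∨ 1 / 2 < g (pq.1 - 1)) ∧ (pq.2 = N ∨ 1 / 2 < g (pq.2 + 1))))
    (h2 : pq' ∈ (Finset.Icc 1 N ×ˢ Finset.Icc 1 N).filter (fun pq =>
      pq.1 ≤ pq.2 ∧ (∀ n ∈ Finset.Icc pq.1 pq.2, g n ≤ 1 / 2) ∧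
      (pq.1 = 1 ∨ 1 / 2 < g (pq.1 - 1)) ∧ (pq.2 = N ∨ 1 / 2 < g (pq.2 + 1))))
    {m : ℕ} (hm : pq.1 ≤ m ∧ m ≤ pq.2) (hm' : pq'.1 ≤ m ∧ m ≤ pq'.2) : pq = pq' := by
  simp only [Finset.mem_filter, Finset.mem_product, Finset.mem_Icc] at h1 h2
  obtain ⟨⟨⟨hp1, hpN⟩, hq1, hqN⟩, hle, hsml, hmaxl, hmaxr⟩ := h1
  obtain ⟨⟨⟨hp1', hpN'⟩, hq1', hqN'⟩, hle', hsml', hmaxl', hmaxr'⟩ := h2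
  have hL : ∀ (u v u' v' : ℕ), 1 ≤ u → (∀ n, u ≤ n → n ≤ v → g n ≤ 1/2) →
      (u' = 1 ∨ 1/2 < g (u' - 1)) → u ≤ m → m ≤ v → u' ≤ m → u ≤ u' →  u = u' := by
    intro u v u' v' hu hsm hmx hum hmv hu'm huu'
    by_contra hne
    have hlt : u < u' := lt_of_le_of_ne huu' hne
    have h12 : g (u' - 1) ≤ 1/2 := hsm _ (by omega) (by omega)
    rcases hmx with h | h
    · omega
    · linarith
  have hp : pq.1 = pq'.1 := by
    rcases le_total pq.1 pq'.1 with hc | hc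
    · exact hL pq.1 pq.2 pq'.1 pq'.2 hp1 (fun n h1 h2 => hsml n ⟨h1, h2⟩)
        hmaxl' hm.1 hm.2 hm'.1 hc
    · exact (hL pq'.1 pq'.2 pq.1 pq.2 hp1' (fun n h1 h2 => hsml' n ⟨h1, h2⟩)
        hmaxl hm'.1 hm'.2 hm.1 hc).symm
  have hR : ∀ (u v u' v' : ℕ), (∀ n, u ≤ n → n ≤ v → g n ≤ 1/2) →
      (v' = N ∨ 1/2 < g (v' + 1)) → v ≤ N → u ≤ m → m ≤ v → m ≤ v' → v' ≤ v → v' = v := by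
    intro u v u' v' hsm hmx hvN hum hmv hmv' hvv'
    by_contra hne
    have hlt : v' < v := lt_of_le_of_ne hvv' hne
    have h12 : g (v' + 1) ≤ 1/2 := hsm _ (by omega) (by omega)
    rcases hmx with h | h
    · omega
    · linarith
  have hq : pq.2 = pq'.2 := by
    rcases le_total pq.2 pq'.2 with hc | hc
    · exact hR pq'.1 pq'.2 pq.1 pq.2 (fun n h1 h2 => hsml' n ⟨h1, h2⟩)
        hmaxr hqN' hm'.1 hm'.2 hm.2 hc
    · exact (hR pq.1 pq.2 pq'.1 pq'.2 (fun n h1 h2 => hsml n ⟨h1, h2⟩)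
        hmaxr' hqN hm.1 hm.2 hm'.2 hc).symm
  exact Prod.ext hp hq

private lemma ppc_ub (lam : ℕ → ℝ)
    (hppc : ∀ I : Set ℝ, I.OrdConnected → Bornology.IsBounded I →
      Tendsto (fun N : ℕ =>
          (((Finset.Icc 1 N ×ˢ Finset.Icc 1 N).filter
            (fun p => p.1 ≠ p.2 ∧ lam p.2 - lam p.1 ∈ I)).card : ℝ) / N)
        atTop (nhds (MeasureTheory.volume I).toReal))
    (x y δ : ℝ) (hxy : x ≤ y) (hδ : 0 < δ) :
    ∀ᶠ M : ℕ in atTop, (pcnt lam x y M : ℝ) ≤ (y - x + δ) * M := by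
  have h := hppc (Set.Ioc x y) Set.ordConnected_Ioc (Metric.isBounded_Ioc x y)
  rw [Real.volume_Ioc, ENNReal.toReal_ofReal (by linarith)] at h
  have h2 : ∀ᶠ M : ℕ in atTop, (pcnt lam x y M : ℝ) / M < (y - x) + δ := by
    have := h.eventually_lt_const (show y - x < (y - x) + δ by linarith)
    exact this.mono (fun M hM => by simpa [pcnt, pset] using hM)
  filter_upwards [h2, eventually_ge_atTop 1] with M hM hM1
  have hM0 : (0:ℝ) < M := by exact_mod_cast hM1
  rw [div_lt_iff₀ hM0] at hM
  exact le_of_lt hM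

private lemma adj_le (lam : ℕ → ℝ) (x y : ℝ) (M : ℕ) :
    (((Finset.Icc 1 M).filter (fun n => lam (n+1) - lam n ∈ Set.Ioc x y)).card : ℕ)
      ≤ pcnt lam x y (M+1) := by
  apply Finset.card_le_card_of_injOn (fun n => (n, n+1))
  · intro n hn
    simp only [Finset.mem_coe, Finset.mem_filter, Finset.mem_Icc] at hn
    simp only [Finset.mem_coe, pcnt, pset, Finset.mem_filter, Finset.mem_product, Finset.mem_Icc]
    refine ⟨⟨⟨hn.1.1, by omega⟩, ⟨by omega, by omega⟩⟩, by omega, hn.2⟩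
  · intro a _ b _ h
    simpa using congrArg Prod.fst h

private lemma tele (lam g : ℕ → ℝ) (hgdef : ∀ n, g n = lam (n + 1) - lam n) :
    ∀ j i : ℕ, i ≤ j + 1 → ∑ n ∈ Finset.Icc i j, g n = lam (j+1) - lam i := by
  intro j
  induction j with
  | zero =>
    intro i hi
    interval_cases i
    · simp [hgdef 0]
    · simp
  | succ j ih =>
    intro i hi
    rcases Nat.lt_or_ge i (j+2) with h | h
    · have h1 : i ≤ j + 1 := by omega
      rw [← Finset.Ico_add_one_right_eq_Icc, Finset.sum_Ico_succ_top (by omega), Finset.Ico_add_one_right_eq_Icc,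
        ih i h1, hgdef (j+1)]
      ring
    · have : i = j + 2 := by omega
      subst this
      rw [Finset.Icc_eq_empty (by omega)]
      simp


private lemma clamp_step (y b : ℝ) (hb : 0 < b) :
    max y 0 ≤ (max (y+b) 0 ^ 2 - max y 0 ^ 2) / (2*b) := by
  rw [le_div_iff₀ (by linarith)]
  rcases le_or_gt y 0 with h | h
  · rcases le_or_gt (y+b) 0 with h2 | h2
    · rw [max_eq_right h, max_eq_right h2]; ring_nf; rfl
    · rw [max_eq_right h, max_eq_left h2.le]; nlinarith
  · rw [max_eq_left h.le, max_eq_left (by linarith)]; nlinarith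

private lemma sumbound (K T : ℕ) (V b c : ℝ) (hV : 0 ≤ V) (hb : 0 < b)
    (hT : c - T*b ≤ V) (f : ℕ → ℝ)
    (hf1 : ∀ t, t < K → f t ≤ V) (hf2 : ∀ t, t < K → f t ≤ max (c - t*b) 0) :
    ∑ t ∈ Finset.range K, f t ≤ T*V + (V+b)^2/(2*b) := by
  have hpos : (0:ℝ) ≤ (V+b)^2/(2*b) := by positivity
  rcases le_or_gt K T with hKT | hKT
  · have h1 : ∑ t ∈ Finset.range K, f t ≤ ∑ _t ∈ Finset.range K, V :=
      Finset.sum_le_sum (fun t ht => hf1 t (Finset.mem_range.1 ht))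
    rw [Finset.sum_const, Finset.card_range, nsmul_eq_mul] at h1
    have : (K:ℝ) ≤ T := by exact_mod_cast hKT
    nlinarith
  · have hsplit : ∑ t ∈ Finset.range K, f t
        = ∑ t ∈ Finset.range T, f t + ∑ t ∈ Finset.Ico T K, f t := by
      rw [Finset.range_eq_Ico, Finset.range_eq_Ico]
      exact (Finset.sum_Ico_consecutive f (Nat.zero_le T) hKT.le).symm
    have h1 : ∑ t ∈ Finset.range T, f t ≤ ∑ _t ∈ Finset.range T, V :=
      Finset.sum_le_sum (fun t ht => hf1 t (lt_of_lt_of_le (Finset.mem_range.1 ht) hKT.le))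
    rw [Finset.sum_const, Finset.card_range, nsmul_eq_mul] at h1
    -- second sum
    set G : ℕ → ℝ := fun j => max (c - ((T:ℝ)+j)*b + b) 0 ^ 2 / (2*b) with hG
    have h2 : ∑ t ∈ Finset.Ico T K, f t ≤ ∑ j ∈ Finset.range (K-T), (G j - G (j+1)) := by
      rw [Finset.sum_Ico_eq_sum_range]
      apply Finset.sum_le_sum
      intro j hj
      have hjK : T + j < K := by
        have := Finset.mem_range.1 hj; omega
      have step := clamp_step (c - ((T:ℝ)+j)*b) b hb
      have hGj1 : G (j+1) = max (c - ((T:ℝ)+j)*b) 0 ^ 2 / (2*b) := by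
        simp only [hG]
        push_cast
        ring_nf
      have hGj : G j = max (c - ((T:ℝ)+j)*b + b) 0 ^ 2 / (2*b) := rfl
      calc f (T + j) ≤ max (c - ((T+j:ℕ):ℝ)*b) 0 := hf2 _ hjK
        _ = max (c - ((T:ℝ)+j)*b) 0 := by push_cast; ring_nf
        _ ≤ G j - G (j+1) := by rw [hGj, hGj1, ← sub_div]; exact step
    rw [Finset.sum_range_sub' G (K-T)] at h2
    have hG0 : G 0 ≤ (V+b)^2/(2*b) := by
      have h40 : G 0 = max (c - (T:ℝ)*b + b) 0 ^ 2 / (2*b) := by simp [hG]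
      have h4 : max (c - (T:ℝ)*b + b) 0 ≤ V + b := max_le (by linarith) (by linarith)
      rw [h40]
      have h5 : (0:ℝ) ≤ max (c - (T:ℝ)*b + b) 0 := le_max_right _ _
      have h6 : max (c - (T:ℝ)*b + b) 0 ^ 2 ≤ (V+b)^2 := by nlinarith
      exact div_le_div_of_nonneg_right h6 (by linarith) |>.trans_eq rfl
    have hGKT : 0 ≤ G (K-T) := by positivity
    linarith [hsplit, h1, h2, hG0]

private lemma packing (lam g : ℕ → ℝ) (hgdef : ∀ n, g n = lam (n + 1) - lam n)
    (ε : ℝ) (hε : ε = 1 / 10 ^ 9)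
    (hgap : ∀ n, 1 ≤ n → g n ≤ 3 / 2 + ε) (N : ℕ) (hN : 10^10 ≤ N)
    (hsg : (1 - ε/10) * N ≤ ∑ n ∈ Finset.Icc 1 N, g n)
    (hcnt : ∀ t ∈ Finset.range (2*10^10), (t:ℝ)*(ε/10) ≤ 1 + ε →
      (pcnt lam (1/2 + (t:ℝ)*(ε/10)) (3/2 + ε) (N+1) : ℝ) ≤ (1 + ε - (t:ℝ)*(ε/10) + ε/10) * ((N:ℝ)+1)) :
    (((Finset.Icc 1 N).filter (fun n => g n ≤ 1/2)).card : ℝ)^2 ≤ (7/2) * ε * (N:ℝ)^2 := by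
  have hε0 : (0:ℝ) < ε := by rw [hε]; norm_num
  set h : ℝ := ε/10 with hh
  have hhic : h = 1/10^10 := by rw [hh, hε]; norm_num
  have hhpos : 0 < h := by rw [hhic]; norm_num
  set K : ℕ := 2*10^10 with hK
  set S : ℕ := ((Finset.Icc 1 N).filter (fun n => g n ≤ 1/2)).card with hS
  have hcardIcc : (Finset.Icc 1 N).card = N := by rw [Nat.card_Icc]; omega
  -- A t
  have hSA : S + ((Finset.Icc 1 N).filter (fun n : ℕ => 1/2 + ((0:ℕ):ℝ)*h < g n)).card = N := by
    have h2 : (Finset.Icc 1 N).filter (fun n : ℕ => 1/2 + ((0:ℕ):ℝ)*h < g n)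
        = (Finset.Icc 1 N).filter (fun n : ℕ => ¬ (g n ≤ 1/2)) := by
      apply Finset.filter_congr
      intro n _
      push_cast
      simp [not_le]
    have h3 := Finset.card_filter_add_card_filter_not
      (s := Finset.Icc 1 N) (p := fun n : ℕ => g n ≤ 1/2)
    rw [hcardIcc] at h3
    rw [hS, h2]
    exact h3
  have hSleN : S ≤ N := by omega
  -- pointwise bound
  have hpoint : ∀ n ∈ Finset.Icc 1 N,
      g n ≤ 1/2 + h * (((Finset.range K).filter (fun t : ℕ => 1/2 + (t:ℝ)*h < g n)).card : ℝ) := by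
    intro n hn
    set c := ((Finset.range K).filter (fun t : ℕ => 1/2 + (t:ℝ)*h < g n)).card with hc
    by_contra hcon
    push_neg at hcon
    have hcK : c ≤ K := le_trans (Finset.card_filter_le _ _) (by simp)
    have hn1 : 1 ≤ n := (Finset.mem_Icc.1 hn).1
    have hKh : (K:ℝ)*h = 2 := by rw [hK, hhic]; norm_num
    rcases eq_or_lt_of_le hcK with hceq | hclt
    · have h3 : g n ≤ 1/2 + h * (c:ℝ) := by
        rw [hceq, mul_comm, hKh]
        linarith [hgap n hn1, show ε ≤ 1 by rw [hε]; norm_num]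
      linarith
    · have hsub : Finset.range (c+1) ⊆ (Finset.range K).filter (fun t : ℕ => 1/2 + (t:ℝ)*h < g n) := by
        intro t ht
        have htc : t ≤ c := by simpa [Nat.lt_succ_iff] using ht
        refine Finset.mem_filter.2 ⟨Finset.mem_range.2 (by omega), ?_⟩
        have h4 : (t:ℝ)*h ≤ (c:ℝ)*h := by
          apply mul_le_mul_of_nonneg_right _ hhpos.le
          exact_mod_cast htc
        linarith
      have h5 := Finset.card_le_card hsub
      rw [Finset.card_range, ← hc] at h5
      omega
  -- sum and swap
  have hswap : ∑ n ∈ Finset.Icc 1 N,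
        (((Finset.range K).filter (fun t : ℕ => 1/2 + (t:ℝ)*h < g n)).card)
      = ∑ t ∈ Finset.range K, ((Finset.Icc 1 N).filter (fun n : ℕ => 1/2 + (t:ℝ)*h < g n)).card := by
    simp only [Finset.card_filter]
    exact Finset.sum_comm
  have hsum2 : ∑ n ∈ Finset.Icc 1 N, g n
      ≤ (N:ℝ)/2 + h * ∑ t ∈ Finset.range K,
          (((Finset.Icc 1 N).filter (fun n : ℕ => 1/2 + (t:ℝ)*h < g n)).card : ℝ) := by
    calc ∑ n ∈ Finset.Icc 1 N, g n
        ≤ ∑ n ∈ Finset.Icc 1 N, (1/2 + h * (((Finset.range K).filter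
            (fun t : ℕ => 1/2 + (t:ℝ)*h < g n)).card : ℝ)) := Finset.sum_le_sum hpoint
      _ = (N:ℝ)/2 + h * ∑ n ∈ Finset.Icc 1 N, (((Finset.range K).filter
            (fun t : ℕ => 1/2 + (t:ℝ)*h < g n)).card : ℝ) := by
          rw [Finset.sum_add_distrib, Finset.sum_const, hcardIcc, ← Finset.mul_sum, nsmul_eq_mul]
          ring
      _ = (N:ℝ)/2 + h * ∑ t ∈ Finset.range K,
          (((Finset.Icc 1 N).filter (fun n : ℕ => 1/2 + (t:ℝ)*h < g n)).card : ℝ) := by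
          rw [← Nat.cast_sum, ← Nat.cast_sum, hswap]
  -- real abbreviations
  set M : ℝ := (N:ℝ) + 1 with hM
  have hMpos : (0:ℝ) < M := by positivity
  set B : ℝ := h * M with hB
  have hBpos : 0 < B := by positivity
  set C : ℝ := (1 + ε + h) * M with hC
  set V : ℝ := (((Finset.Icc 1 N).filter (fun n : ℕ => 1/2 + ((0:ℕ):ℝ)*h < g n)).card : ℝ) with hV
  have hV0 : 0 ≤ V := by rw [hV]; exact Nat.cast_nonneg _
  have hVN : V ≤ (N:ℝ) := by
    rw [hV]
    have h4 : ((Finset.Icc 1 N).filter (fun n : ℕ => 1/2 + ((0:ℕ):ℝ)*h < g n)).card ≤ N :=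
      le_trans (Finset.card_filter_le _ _) (le_of_eq hcardIcc)
    exact_mod_cast h4
  have hVS : V = (N:ℝ) - (S:ℝ) := by
    have h5 := congrArg (fun k : ℕ => (k:ℝ)) hSA
    push_cast at h5
    rw [hV]
    linarith
  have hVC : V ≤ C := by
    rw [hC]
    nlinarith
  -- bounds on A t
  have hf1 : ∀ t : ℕ, t < K →
      (((Finset.Icc 1 N).filter (fun n : ℕ => 1/2 + (t:ℝ)*h < g n)).card : ℝ) ≤ V := by
    intro t _
    rw [hV]
    have hsub2 : ((Finset.Icc 1 N).filter (fun n : ℕ => 1/2 + (t:ℝ)*h < g n))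
        ⊆ ((Finset.Icc 1 N).filter (fun n : ℕ => 1/2 + ((0:ℕ):ℝ)*h < g n)) := by
      intro n hn
      simp only [Finset.mem_filter] at hn ⊢
      refine ⟨hn.1, ?_⟩
      have ht0 : (0:ℝ) ≤ (t:ℝ)*h := mul_nonneg (Nat.cast_nonneg t) hhpos.le
      have hz : ((0:ℕ):ℝ) * h = 0 := by norm_num
      rw [hz]
      linarith [hn.2]
    have hcc := Finset.card_le_card hsub2
    exact_mod_cast hcc
  have hf2 : ∀ t : ℕ, t < K →
      (((Finset.Icc 1 N).filter (fun n : ℕ => 1/2 + (t:ℝ)*h < g n)).card : ℝ)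
        ≤ max (C - (t:ℝ)*B) 0 := by
    intro t htK
    rcases le_or_gt ((t:ℝ)*h) (1+ε) with hth | hth
    · have heq : ((Finset.Icc 1 N).filter (fun n : ℕ => 1/2 + (t:ℝ)*h < g n))
          = ((Finset.Icc 1 N).filter
              (fun n : ℕ => lam (n+1) - lam n ∈ Set.Ioc (1/2 + (t:ℝ)*h) (3/2 + ε))) := by
        apply Finset.filter_congr
        intro n hn
        have hn1 : 1 ≤ n := (Finset.mem_Icc.1 hn).1
        rw [← hgdef n, Set.mem_Ioc]
        exact ⟨fun hx => ⟨hx, hgap n hn1⟩, fun hx => hx.1⟩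
      have h6 := adj_le lam (1/2 + (t:ℝ)*h) (3/2 + ε) N
      rw [← heq] at h6
      have h7 := hcnt t (Finset.mem_range.2 htK) hth
      have h8 : (1 + ε - (t:ℝ)*h + h) * ((N:ℝ)+1) = C - (t:ℝ)*B := by
        rw [hC, hB, hM]; ring
      calc (((Finset.Icc 1 N).filter (fun n : ℕ => 1/2 + (t:ℝ)*h < g n)).card : ℝ)
          ≤ (pcnt lam (1/2 + (t:ℝ)*h) (3/2 + ε) (N+1) : ℝ) := by exact_mod_cast h6
        _ ≤ (1 + ε - (t:ℝ)*h + h) * ((N:ℝ)+1) := h7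
        _ = C - (t:ℝ)*B := h8
        _ ≤ max (C - (t:ℝ)*B) 0 := le_max_left _ _
    · have hempty : ((Finset.Icc 1 N).filter (fun n : ℕ => 1/2 + (t:ℝ)*h < g n)) = ∅ := by
        apply Finset.filter_eq_empty_iff.2
        intro n hn
        have hn1 : 1 ≤ n := (Finset.mem_Icc.1 hn).1
        push_neg
        linarith [hgap n hn1]
      rw [hempty]
      simp
  -- T
  set T : ℕ := ⌈(C - V)/B⌉₊ + 1 with hT
  have hceil : (C - V)/B ≤ (⌈(C - V)/B⌉₊ : ℝ) := Nat.le_ceil _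
  have hdivnn : 0 ≤ (C - V)/B := div_nonneg (by linarith [hVC]) hBpos.le
  have hTle : C - (T:ℝ)*B ≤ V := by
    have : ((T:ℝ))*B ≥ ((C - V)/B)*B + B := by
      rw [hT]
      push_cast
      nlinarith
    rw [div_mul_cancel₀ _ (ne_of_gt hBpos)] at this
    linarith
  have hTub : (T:ℝ) ≤ (C - V)/B + 2 := by
    have := Nat.ceil_lt_add_one hdivnn
    rw [hT]
    push_cast
    linarith
  have hsb := sumbound K T V B C hV0 hBpos hTle
    (fun t => (((Finset.Icc 1 N).filter (fun n : ℕ => 1/2 + (t:ℝ)*h < g n)).card : ℝ)) hf1 hf2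
  -- combine
  have hkey : (1 - h) * (N:ℝ) ≤ (N:ℝ)/2 + h * ((T:ℝ)*V + (V+B)^2/(2*B)) := by
    have h9 : h * ∑ t ∈ Finset.range K,
        (((Finset.Icc 1 N).filter (fun n : ℕ => 1/2 + (t:ℝ)*h < g n)).card : ℝ)
        ≤ h * ((T:ℝ)*V + (V+B)^2/(2*B)) := by
      apply mul_le_mul_of_nonneg_left hsb hhpos.le
    linarith [hsg, hsum2]
  have e1 : h * ((T:ℝ)*V + (V+B)^2/(2*B)) = ((T:ℝ)*B)*V/M + (V+B)^2/(2*M) := by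
    rw [hB]
    field_simp
  have e2 : (T:ℝ)*B ≤ C - V + 2*B := by
    have := mul_le_mul_of_nonneg_right hTub hBpos.le
    rw [add_mul, div_mul_cancel₀ _ (ne_of_gt hBpos)] at this
    linarith
  have e3 : ((T:ℝ)*B)*V/M ≤ (C - V + 2*B)*V/M := by
    apply div_le_div_of_nonneg_right ?_ hMpos.le
    exact mul_le_mul_of_nonneg_right e2 hV0
  have hkey2 : (1 - h) * (N:ℝ) ≤ (N:ℝ)/2 + (C - V + 2*B)*V/M + (V+B)^2/(2*M) := by
    rw [e1] at hkey
    linarith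
  -- multiply by 2M
  have hkey3 : 2*M*((1 - h) * (N:ℝ)) ≤ M*(N:ℝ) + 2*((C - V + 2*B)*V) + (V+B)^2 := by
    have := mul_le_mul_of_nonneg_left hkey2 (by linarith : (0:ℝ) ≤ 2*M)
    have e4 : 2*M*((N:ℝ)/2 + (C - V + 2*B)*V/M + (V+B)^2/(2*M))
        = M*(N:ℝ) + 2*((C - V + 2*B)*V) + (V+B)^2 := by
      field_simp
    linarith [e4 ▸ this]
  -- final arithmetic
  have hxN : (10:ℝ)^10 ≤ (N:ℝ) := by exact_mod_cast hN
  have hs0 : (0:ℝ) ≤ (S:ℝ) := Nat.cast_nonneg _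
  have hsN : (S:ℝ) ≤ (N:ℝ) := by exact_mod_cast hSleN
  rw [hVS] at hkey3
  rw [hC, hB, hM] at hkey3
  rw [hε] at hkey3 ⊢
  rw [hh, hε] at hkey3
  nlinarith [hkey3, hxN, hs0, hsN, sq_nonneg ((N:ℝ) - (S:ℝ)), mul_nonneg hs0 (by linarith : (0:ℝ) ≤ (N:ℝ))]



open scoped Classical in
/-- The collection `𝓘^N` of maximal subintervals of `{1,…,N}` on which the gaps `g n` are at
most `1/2`, encoded as the set of pairs `(p, q)` of endpoints, `1 ≤ p ≤ q ≤ N`. -/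
noncomputable def maximalIntervals (g : ℕ → ℝ) (N : ℕ) : Finset (ℕ × ℕ) :=
  (Finset.Icc 1 N ×ˢ Finset.Icc 1 N).filter fun pq =>
    pq.1 ≤ pq.2 ∧ (∀ n ∈ Finset.Icc pq.1 pq.2, g n ≤ 1 / 2) ∧
      (pq.1 = 1 ∨ 1 / 2 < g (pq.1 - 1)) ∧ (pq.2 = N ∨ 1 / 2 < g (pq.2 + 1))

open scoped Classical in
/-- Let `(λ_n)` be strictly increasing with average gap `1` and Poisson pair correlations,
let `ε = 10⁻⁹`, and suppose `g n := λ_{n+1} − λ_n ≤ 3/2 + ε` for all `n ≥ 1`. Then for every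
`a ∈ (0, 1/2)`, for all sufficiently large `N` the following holds: whenever each
`I = (p,q) ∈ 𝓘^N` is partitioned into `r I` consecutive nonempty subintervals
`J_k^I = {e I (k-1) + 1, …, e I k}` (cut points `e I 0 = p − 1 < ⋯ < e I (r I) = q`) with
`summ(J_k^I) ≤ 1/2` for all `k`, and with
`#{(n,n') ∈ J_k^I × J_{k+1}^I : g n + ⋯ + g n' > 1/2} ≥ (1/2)·min(|J_k^I|, |J_{k+1}^I|)²`
for all `1 ≤ k ≤ r I − 1`, then
`∑_{I ∈ 𝓘^N} ∑_{k=1}^{r I − 1} PPC^{J_k^I, J_{k+1}^I}(0, a)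
  ≤ 2√2·ε^{1/4}·(∑_{I ∈ 𝓘^N} ∑_{k=1}^{r I} |J_k^I|²)^{1/2}·√N`. -/
theorem stmt_14 (lam : ℕ → ℝ) (g : ℕ → ℝ) (hgdef : ∀ n, g n = lam (n + 1) - lam n)
    (hmono : ∀ n, 1 ≤ n → lam n < lam (n + 1))
    (havg : Tendsto (fun N : ℕ => (∑ n ∈ Finset.Icc 1 N, g n) / N) atTop (nhds 1))
    (hppc : ∀ I : Set ℝ, I.OrdConnected → Bornology.IsBounded I →
      Tendsto (fun N : ℕ =>
          (((Finset.Icc 1 N ×ˢ Finset.Icc 1 N).filter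
            (fun p => p.1 ≠ p.2 ∧ lam p.2 - lam p.1 ∈ I)).card : ℝ) / N)
        atTop (nhds (MeasureTheory.volume I).toReal))
    (ε : ℝ) (hε : ε = 1 / 10 ^ 9)
    (hgap : ∀ n, 1 ≤ n → g n ≤ 3 / 2 + ε) :
    ∀ a : ℝ, 0 < a → a < 1 / 2 → ∀ᶠ N : ℕ in atTop,
      ∀ (r : ℕ × ℕ → ℕ) (e : ℕ × ℕ → ℕ → ℕ),
        (∀ pq ∈ maximalIntervals g N,
          1 ≤ r pq ∧ e pq 0 = pq.1 - 1 ∧ e pq (r pq) = pq.2 ∧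
          (∀ k < r pq, e pq k < e pq (k + 1)) ∧
          (∀ k, 1 ≤ k → k ≤ r pq →
            ∑ i ∈ Finset.Icc (e pq (k - 1) + 1) (e pq k), g i ≤ 1 / 2) ∧
          (∀ k, 1 ≤ k → k ≤ r pq - 1 →
            1 / 2 * ((min (e pq k - e pq (k - 1)) (e pq (k + 1) - e pq k) : ℕ) : ℝ) ^ 2 ≤
              (((Finset.Icc (e pq (k - 1) + 1) (e pq k) ×ˢ
                  Finset.Icc (e pq k + 1) (e pq (k + 1))).filter
                (fun nn => 1 / 2 < ∑ i ∈ Finset.Icc nn.1 nn.2, g i)).card : ℝ))) →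
        ∑ pq ∈ maximalIntervals g N, ∑ k ∈ Finset.Icc 1 (r pq - 1),
            (((Finset.Icc (e pq (k - 1) + 1) (e pq k) ×ˢ
                Finset.Icc (e pq k + 1) (e pq (k + 1))).filter
              (fun nn => ∑ i ∈ Finset.Icc nn.1 nn.2, g i < a)).card : ℝ)
          ≤ 2 * Real.sqrt 2 * ε ^ ((1 : ℝ) / 4) *
              Real.sqrt (∑ pq ∈ maximalIntervals g N, ∑ k ∈ Finset.Icc 1 (r pq),
                ((e pq k - e pq (k - 1) : ℕ) : ℝ) ^ 2) * Real.sqrt N := by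
  intro a ha0 ha2
  have hε0 : (0:ℝ) < ε := by rw [hε]; norm_num
  have hg0 : ∀ n : ℕ, 1 ≤ n → 0 < g n := by
    intro n hn; rw [hgdef]; linarith [hmono n hn]
  -- eventual facts
  have F1 : ∀ᶠ N : ℕ in atTop, (1 - ε/10) * (N:ℝ) ≤ ∑ n ∈ Finset.Icc 1 N, g n := by
    have h := havg.eventually_const_lt (show 1 - ε/10 < 1 by linarith)
    filter_upwards [h, eventually_ge_atTop 1] with N hN hN1
    have hN0 : (0:ℝ) < N := by exact_mod_cast hN1
    have h2 := (lt_div_iff₀ hN0).1 hN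
    linarith
  have F2 : ∀ᶠ N : ℕ in atTop, ∀ t ∈ Finset.range (2*10^10), (t:ℝ)*(ε/10) ≤ 1 + ε →
      (pcnt lam (1/2 + (t:ℝ)*(ε/10)) (3/2 + ε) (N+1) : ℝ)
        ≤ (1 + ε - (t:ℝ)*(ε/10) + ε/10) * ((N:ℝ)+1) := by
    rw [eventually_all_finset]
    intro t _
    rcases le_or_gt ((t:ℝ)*(ε/10)) (1+ε) with hth | hth
    · have h := ppc_ub lam hppc (1/2 + (t:ℝ)*(ε/10)) (3/2+ε) (ε/10) (by linarith) (by linarith)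
      filter_upwards [ev_succ h] with N hN _
      have hc : ((N+1:ℕ):ℝ) = (N:ℝ)+1 := by push_cast; ring
      rw [hc] at hN
      calc (pcnt lam (1/2 + (t:ℝ)*(ε/10)) (3/2 + ε) (N+1) : ℝ)
          ≤ (3/2+ε - (1/2 + (t:ℝ)*(ε/10)) + ε/10)*((N:ℝ)+1) := hN
        _ = (1 + ε - (t:ℝ)*(ε/10) + ε/10) * ((N:ℝ)+1) := by ring
    · exact Eventually.of_forall (fun N h' => absurd h' (not_le.2 hth))
  have F3 : ∀ᶠ N : ℕ in atTop, (pcnt lam (1/2) 1 (N+1) : ℝ) ≤ (1/2 + ε/10) * ((N:ℝ)+1) := by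
    have h := ppc_ub lam hppc (1/2) 1 (ε/10) (by norm_num) (by linarith)
    filter_upwards [ev_succ h] with N hN
    have hc : ((N+1:ℕ):ℝ) = (N:ℝ)+1 := by push_cast; ring
    rw [hc] at hN
    calc (pcnt lam (1/2) 1 (N+1) : ℝ) ≤ (1 - 1/2 + ε/10)*((N:ℝ)+1) := hN
      _ = (1/2 + ε/10) * ((N:ℝ)+1) := by ring
  have F4 : ∀ᶠ N : ℕ in atTop, (pcnt lam 1 (3/2+ε) (N+1) : ℝ) ≤ (1/2 + ε + ε/10) * ((N:ℝ)+1) := by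
    have h := ppc_ub lam hppc 1 (3/2+ε) (ε/10) (by linarith) (by linarith)
    filter_upwards [ev_succ h] with N hN
    have hc : ((N+1:ℕ):ℝ) = (N:ℝ)+1 := by push_cast; ring
    rw [hc] at hN
    calc (pcnt lam 1 (3/2+ε) (N+1) : ℝ) ≤ (3/2+ε - 1 + ε/10)*((N:ℝ)+1) := hN
      _ = (1/2 + ε + ε/10) * ((N:ℝ)+1) := by ring
  filter_upwards [F1, F2, F3, F4, eventually_ge_atTop (10^10)] with N hF1 hF2 hF3 hF4 hF5
  intro r e hre
  -- √ε facts
  have hpack := packing lam g hgdef ε hε hgap N hF5 hF1 hF2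
  set u : ℝ := Real.sqrt ε with hu
  have hu0 : (0:ℝ) ≤ u := Real.sqrt_nonneg _
  have hu2 : u^2 = ε := Real.sq_sqrt hε0.le
  have hul : (316/10^7 : ℝ) ≤ u := by
    rw [hu, show (316/10^7:ℝ) = Real.sqrt ((316/10^7)^2) from (Real.sqrt_sq (by norm_num)).symm]
    apply Real.sqrt_le_sqrt
    rw [hε]; norm_num
  have hxN : (10:ℝ)^10 ≤ (N:ℝ) := by exact_mod_cast hF5
  have hNR0 : (0:ℝ) ≤ (N:ℝ) := Nat.cast_nonneg _
  set S : ℕ := ((Finset.Icc 1 N).filter (fun n => g n ≤ 1/2)).card with hSdef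
  have hs0 : (0:ℝ) ≤ (S:ℝ) := Nat.cast_nonneg _
  have hSu : (S:ℝ) ≤ (19/10) * u * (N:ℝ) := by
    have huN : (0:ℝ) < u * (N:ℝ) := by nlinarith
    nlinarith [hpack, hu2, hu0, hs0, hxN, huN]
  -- adjacent count partition
  set G : ℕ := ((Finset.Icc 1 N).filter (fun n => 1 < g n)).card with hGdef
  set AdS : Finset ℕ := (Finset.Icc 1 N).filter
      (fun n => lam (n+1) - lam n ∈ Set.Ioc (1/2:ℝ) 1) with hAdS
  have hcardIcc : (Finset.Icc 1 N).card = N := by rw [Nat.card_Icc]; omega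
  have htri : S + AdS.card + G = N := by
    have e1 : AdS = (Finset.Icc 1 N).filter (fun n => 1/2 < g n ∧ g n ≤ 1) := by
      rw [hAdS]
      apply Finset.filter_congr
      intro n _
      rw [← hgdef n, Set.mem_Ioc]
    have e3 : (Finset.Icc 1 N).filter (fun n => ¬ (g n ≤ 1/2))
        = ((Finset.Icc 1 N).filter (fun n => 1/2 < g n ∧ g n ≤ 1))
          ∪ ((Finset.Icc 1 N).filter (fun n => 1 < g n)) := by
      ext n
      simp only [Finset.mem_filter, Finset.mem_union, not_le]
      constructor
      · rintro ⟨hn, hgn⟩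
        rcases le_or_gt (g n) 1 with hc | hc
        · exact Or.inl ⟨hn, hgn, hc⟩
        · exact Or.inr ⟨hn, hc⟩
      · rintro (⟨hn, hgn, _⟩ | ⟨hn, hgn⟩)
        · exact ⟨hn, hgn⟩
        · exact ⟨hn, by linarith⟩
    have hdisj0 : Disjoint ((Finset.Icc 1 N).filter (fun n => 1/2 < g n ∧ g n ≤ 1))
        ((Finset.Icc 1 N).filter (fun n => 1 < g n)) := by
      rw [Finset.disjoint_left]
      intro n h1 h2
      have ha := (Finset.mem_filter.1 h1).2
      have hb := (Finset.mem_filter.1 h2).2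
      linarith [ha.2]
    have e4 : ((Finset.Icc 1 N).filter (fun n => ¬ (g n ≤ 1/2))).card = AdS.card + G := by
      rw [e3, Finset.card_union_of_disjoint hdisj0, ← e1, hGdef]
    have e5 := Finset.card_filter_add_card_filter_not
      (s := Finset.Icc 1 N) (p := fun n => g n ≤ 1/2)
    rw [hcardIcc] at e5
    rw [hSdef]
    omega
  have hGb : (G:ℝ) ≤ (1/2 + ε + ε/10) * ((N:ℝ)+1) := by
    have heq : (Finset.Icc 1 N).filter (fun n => 1 < g n)
        = (Finset.Icc 1 N).filter (fun n => lam (n+1) - lam n ∈ Set.Ioc (1:ℝ) (3/2+ε)) := by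
      apply Finset.filter_congr
      intro n hn
      have hgn := hgap n (Finset.mem_Icc.1 hn).1
      rw [← hgdef n, Set.mem_Ioc]
      exact ⟨fun hx => ⟨hx, hgn⟩, fun hx => hx.1⟩
    have e1 : G ≤ pcnt lam 1 (3/2+ε) (N+1) := by
      rw [hGdef, heq]
      exact adj_le lam 1 (3/2+ε) N
    exact le_trans (by exact_mod_cast e1) hF4
  -- the target pair set
  set Tset : Finset (ℕ×ℕ) := ((Finset.Icc 1 (N+1) ×ˢ Finset.Icc 1 (N+1)).filter
      (fun ij => ij.1 + 2 ≤ ij.2 ∧ lam ij.2 - lam ij.1 ∈ Set.Ioc (1/2:ℝ) 1)) with hTdef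
  have hTcard : (Tset.card : ℝ) ≤ 2 * u * (N:ℝ) := by
    have him : AdS.image (fun n => (n, n+1)) ⊆ pset lam (1/2) 1 (N+1) := by
      intro ij hij
      obtain ⟨n, hn, rfl⟩ := Finset.mem_image.1 hij
      obtain ⟨hnIcc, hcond⟩ := Finset.mem_filter.1 hn
      obtain ⟨h1n, hnN⟩ := Finset.mem_Icc.1 hnIcc
      refine Finset.mem_filter.2 ⟨Finset.mem_product.2
        ⟨Finset.mem_Icc.2 ⟨h1n, by omega⟩, Finset.mem_Icc.2 ⟨by omega, by omega⟩⟩,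
        by omega, hcond⟩
    have hTsub : Tset ⊆ pset lam (1/2) 1 (N+1) := by
      intro ij hij
      obtain ⟨hmem, hcond⟩ := Finset.mem_filter.1 hij
      exact Finset.mem_filter.2 ⟨hmem, by omega, hcond.2⟩
    have hdisj : Disjoint Tset (AdS.image (fun n => (n, n+1))) := by
      rw [Finset.disjoint_left]
      rintro ij hT hA
      obtain ⟨n, hn, rfl⟩ := Finset.mem_image.1 hA
      have := (Finset.mem_filter.1 hT).2.1
      omega
    have hcardim : (AdS.image (fun n => (n, n+1))).card = AdS.card :=
      Finset.card_image_of_injective _ (fun x y hxy => by simpa using congrArg Prod.fst hxy)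
    have hcount : Tset.card + AdS.card ≤ pcnt lam (1/2) 1 (N+1) := by
      rw [← hcardim, ← Finset.card_union_of_disjoint hdisj]
      exact Finset.card_le_card (Finset.union_subset hTsub him)
    have hc : (Tset.card:ℝ) + (AdS.card:ℝ) ≤ (1/2 + ε/10)*((N:ℝ)+1) :=
      le_trans (by exact_mod_cast hcount) hF3
    have hAdR : (AdS.card:ℝ) = (N:ℝ) - (S:ℝ) - (G:ℝ) := by
      have h7 := congrArg (fun k : ℕ => (k:ℝ)) htri
      push_cast at h7
      linarith
    rw [hε] at hc hGb
    nlinarith [hul, hxN, hSu, hGb, hc, hAdR, mul_nonneg (sub_nonneg.2 hul) hNR0]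
  -- sigma machinery
  set Ω : Finset ((_ : ℕ × ℕ) × ℕ) :=
    (maximalIntervals g N).sigma (fun pq => Finset.Icc 1 (r pq - 1)) with hΩ
  set Bs : ((_ : ℕ × ℕ) × ℕ) → Finset (ℕ × ℕ) := fun x =>
    (Finset.Icc (e x.1 (x.2 - 1) + 1) (e x.1 x.2) ×ˢ
      Finset.Icc (e x.1 x.2 + 1) (e x.1 (x.2 + 1))).filter
      (fun nn => 1/2 < ∑ i ∈ Finset.Icc nn.1 nn.2, g i) with hBs
  set φ : ℕ × ℕ → ℕ × ℕ := fun nn => (nn.1, nn.2 + 1) with hφ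
  have hφinj : Function.Injective φ := by
    intro x y hxy
    rw [hφ] at hxy
    have h1 := congrArg Prod.fst hxy
    have h2 := congrArg Prod.snd hxy
    simp only at h1 h2
    exact Prod.ext h1 (by omega)
  have hemono : ∀ pq ∈ maximalIntervals g N, ∀ j : ℕ, j ≤ r pq → ∀ i : ℕ, i ≤ j →
      e pq i ≤ e pq j := by
    intro pq hpq j
    induction j with
    | zero => intro _ i hi; rw [Nat.le_zero.1 hi]
    | succ j ih =>
      intro hjr i hi
      rcases Nat.eq_or_lt_of_le hi with hh | hh
      · rw [hh]
      · exact le_trans (ih (by omega) i (by omega))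
          (le_of_lt ((hre pq hpq).2.2.2.1 j (by omega)))
  have hMI : ∀ pq ∈ maximalIntervals g N, 1 ≤ pq.1 ∧ pq.1 ≤ pq.2 ∧ pq.2 ≤ N := by
    intro pq hpq
    have h := hpq
    unfold maximalIntervals at h
    simp only [Finset.mem_filter, Finset.mem_product, Finset.mem_Icc] at h
    exact ⟨h.1.1.1, h.2.1, h.1.2.2⟩
  have hBfact : ∀ x ∈ Ω, ∀ mm ∈ Bs x,
      1 ≤ mm.1 ∧ x.1.1 ≤ mm.1 ∧ e x.1 (x.2 - 1) + 1 ≤ mm.1 ∧ mm.1 ≤ e x.1 x.2 ∧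
        e x.1 x.2 + 1 ≤ mm.2 ∧ mm.2 ≤ x.1.2 ∧
        lam (mm.2 + 1) - lam mm.1 ∈ Set.Ioc (1/2 : ℝ) 1 := by
    intro x hx mm hmm
    rw [hΩ, Finset.mem_sigma] at hx
    obtain ⟨hpq, hk⟩ := hx
    obtain ⟨hk1, hkr⟩ := Finset.mem_Icc.1 hk
    obtain ⟨hr1, he0, her, hei, hsm, _⟩ := hre x.1 hpq
    obtain ⟨hp1, hple, hqN⟩ := hMI x.1 hpq
    rw [hBs] at hmm
    obtain ⟨hmemP, hgt⟩ := Finset.mem_filter.1 hmm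
    obtain ⟨hmIcc, hm'Icc⟩ := Finset.mem_product.1 hmemP
    obtain ⟨hm1, hm2⟩ := Finset.mem_Icc.1 hmIcc
    obtain ⟨hm'1, hm'2⟩ := Finset.mem_Icc.1 hm'Icc
    have hkr' : x.2 + 1 ≤ r x.1 := by omega
    have h0k : e x.1 0 ≤ e x.1 (x.2 - 1) := hemono x.1 hpq (x.2 - 1) (by omega) 0 (Nat.zero_le _)
    have hkrq : e x.1 (x.2 + 1) ≤ e x.1 (r x.1) := hemono x.1 hpq (r x.1) le_rfl (x.2 + 1) hkr'
    have hpm : x.1.1 ≤ mm.1 := by rw [he0] at h0k; omega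
    have hm'q : mm.2 ≤ x.1.2 := by rw [her] at hkrq; omega
    have h1m : 1 ≤ mm.1 := le_trans hp1 hpm
    have hiok : e x.1 (x.2 - 1) ≤ e x.1 x.2 := hemono x.1 hpq x.2 (by omega) (x.2 - 1) (by omega)
    have hiok1 : e x.1 x.2 ≤ e x.1 (x.2 + 1) := hemono x.1 hpq (x.2 + 1) hkr' x.2 (by omega)
    have htel : lam (mm.2 + 1) - lam mm.1 = ∑ i ∈ Finset.Icc mm.1 mm.2, g i :=
      (tele lam g hgdef mm.2 mm.1 (by omega)).symm
    have hbound : ∑ i ∈ Finset.Icc mm.1 mm.2, g i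
        ≤ ∑ i ∈ Finset.Icc (e x.1 (x.2 - 1) + 1) (e x.1 (x.2 + 1)), g i := by
      apply Finset.sum_le_sum_of_subset_of_nonneg (Finset.Icc_subset_Icc (by omega) (by omega))
      intro i hi _
      refine (hg0 i ?_).le
      have := (Finset.mem_Icc.1 hi).1
      omega
    have hsplit : ∑ i ∈ Finset.Icc (e x.1 (x.2 - 1) + 1) (e x.1 (x.2 + 1)), g i
        = ∑ i ∈ Finset.Icc (e x.1 (x.2 - 1) + 1) (e x.1 x.2), g i
          + ∑ i ∈ Finset.Icc (e x.1 x.2 + 1) (e x.1 (x.2 + 1)), g i := by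
      rw [Finset.Icc_add_one_left_eq_Ioc, Finset.Icc_add_one_left_eq_Ioc, Finset.Icc_add_one_left_eq_Ioc]
      exact (Finset.sum_Ioc_consecutive g hiok hiok1).symm
    have hsm1 := hsm x.2 hk1 (by omega)
    have hsm2 := hsm (x.2 + 1) (by omega) hkr'
    have hkk : x.2 + 1 - 1 = x.2 := by omega
    rw [hkk] at hsm2
    refine ⟨h1m, hpm, hm1, hm2, hm'1, hm'q, ?_⟩
    rw [Set.mem_Ioc, htel]
    refine ⟨hgt, ?_⟩
    rw [hsplit] at hbound
    linarith
  have hBsub : ∀ x ∈ Ω, (Bs x).image φ ⊆ Tset := by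
    intro x hx ij hij
    obtain ⟨mm, hmm, heq⟩ := Finset.mem_image.1 hij
    obtain ⟨h1m, hpm, _, _, hm'1, hm'q, hIoc⟩ := hBfact x hx mm hmm
    have hxin := hx
    rw [hΩ, Finset.mem_sigma] at hxin
    have hqN := (hMI x.1 hxin.1).2.2
    subst heq
    rw [hφ, hTdef]
    simp only [Finset.mem_filter, Finset.mem_product, Finset.mem_Icc]
    have hfact2 := hBfact x hx mm hmm
    refine ⟨⟨⟨h1m, by omega⟩, ⟨by omega, by omega⟩⟩, by omega, hIoc⟩
  have hBdisj : ∀ x ∈ Ω, ∀ y ∈ Ω, x ≠ y → Disjoint ((Bs x).image φ) ((Bs y).image φ) := by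
    intro x hx y hy hne
    rw [Finset.disjoint_left]
    intro ij hijx hijy
    obtain ⟨mm, hmm, heq⟩ := Finset.mem_image.1 hijx
    obtain ⟨nn, hnn, heq'⟩ := Finset.mem_image.1 hijy
    have hmn : mm = nn := hφinj (heq.trans heq'.symm)
    subst hmn
    obtain ⟨h1m, hpm, hm1, hm2, hm'1, hm'q, _⟩ := hBfact x hx mm hmm
    obtain ⟨_, hpm', hn1, hn2, hn'1, hn'q, _⟩ := hBfact y hy mm hnn
    have hxin := hx
    have hyin := hy
    rw [hΩ, Finset.mem_sigma] at hxin hyin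
    have hx2 := Finset.mem_Icc.1 hxin.2
    have hy2 := Finset.mem_Icc.1 hyin.2
    have hmq : mm.1 ≤ x.1.2 := by omega
    have hmq' : mm.1 ≤ y.1.2 := by omega
    have hxy1 : x.1 = y.1 := by
      have hmi1 := hxin.1
      have hmi2 := hyin.1
      unfold maximalIntervals at hmi1 hmi2
      exact mi_disj g N hmi1 hmi2 ⟨hpm, hmq⟩ ⟨hpm', hmq'⟩
    have hkk' : x.2 ≠ y.2 := fun hk => hne (Sigma.ext hxy1 (heq_of_eq hk))
    rw [← hxy1] at hn1 hn2 hy2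
    have hpq := hxin.1
    rcases lt_or_gt_of_ne hkk' with hlt | hlt
    · have hmono2 : e x.1 x.2 ≤ e x.1 (y.2 - 1) :=
        hemono x.1 hpq (y.2 - 1) (by omega) x.2 (by omega)
      omega
    · have hmono2 : e x.1 y.2 ≤ e x.1 (x.2 - 1) :=
        hemono x.1 hpq (x.2 - 1) (by omega) y.2 (by omega)
      omega
  have hcardsum : ∑ x ∈ Ω, (Bs x).card ≤ Tset.card := by
    calc ∑ x ∈ Ω, (Bs x).card = ∑ x ∈ Ω, ((Bs x).image φ).card := by
          refine Finset.sum_congr rfl (fun x _ => ?_)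
          exact (Finset.card_image_of_injective _ hφinj).symm
      _ = (Ω.biUnion (fun x => (Bs x).image φ)).card := (Finset.card_biUnion hBdisj).symm
      _ ≤ Tset.card := Finset.card_le_card (Finset.biUnion_subset.2 hBsub)
  -- min² bound
  have hm2T : ∑ x ∈ Ω, ((min (e x.1 x.2 - e x.1 (x.2 - 1)) (e x.1 (x.2 + 1) - e x.1 x.2) : ℕ) : ℝ)^2
      ≤ 4 * u * (N:ℝ) := by
    have hb1 : ∀ x ∈ Ω,
        ((min (e x.1 x.2 - e x.1 (x.2 - 1)) (e x.1 (x.2 + 1) - e x.1 x.2) : ℕ) : ℝ)^2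
          ≤ 2 * ((Bs x).card : ℝ) := by
      intro x hx
      rw [hΩ, Finset.mem_sigma] at hx
      obtain ⟨hk1, hkr⟩ := Finset.mem_Icc.1 hx.2
      have hBc := (hre x.1 hx.1).2.2.2.2.2 x.2 hk1 hkr
      rw [hBs]
      linarith
    calc ∑ x ∈ Ω, ((min (e x.1 x.2 - e x.1 (x.2 - 1)) (e x.1 (x.2 + 1) - e x.1 x.2) : ℕ) : ℝ)^2
        ≤ ∑ x ∈ Ω, 2 * ((Bs x).card : ℝ) := Finset.sum_le_sum hb1
      _ = 2 * ((∑ x ∈ Ω, (Bs x).card : ℕ) : ℝ) := by rw [← Finset.mul_sum, Nat.cast_sum]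
      _ ≤ 2 * (Tset.card : ℝ) := by
          have h2 : ((∑ x ∈ Ω, (Bs x).card : ℕ) : ℝ) ≤ (Tset.card : ℝ) := by
            exact_mod_cast hcardsum
          linarith
      _ ≤ 4 * u * (N:ℝ) := by linarith [hTcard]
  -- bound each A-card by the product min*max
  have hAx : ∀ pq ∈ maximalIntervals g N, ∀ k ∈ Finset.Icc 1 (r pq - 1),
      (((Finset.Icc (e pq (k - 1) + 1) (e pq k) ×ˢ
          Finset.Icc (e pq k + 1) (e pq (k + 1))).filter
        (fun nn => ∑ i ∈ Finset.Icc nn.1 nn.2, g i < a)).card : ℝ)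
      ≤ ((min (e pq k - e pq (k - 1)) (e pq (k + 1) - e pq k) : ℕ) : ℝ)
        * ((max (e pq k - e pq (k - 1)) (e pq (k + 1) - e pq k) : ℕ) : ℝ) := by
    intro pq _ k _
    have h1 := Finset.card_filter_le (Finset.Icc (e pq (k - 1) + 1) (e pq k) ×ˢ
      Finset.Icc (e pq k + 1) (e pq (k + 1)))
      (fun nn => ∑ i ∈ Finset.Icc nn.1 nn.2, g i < a)
    have h2 : (Finset.Icc (e pq (k - 1) + 1) (e pq k) ×ˢ
        Finset.Icc (e pq k + 1) (e pq (k + 1))).card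
        = (min (e pq k - e pq (k - 1)) (e pq (k + 1) - e pq k))
          * (max (e pq k - e pq (k - 1)) (e pq (k + 1) - e pq k)) := by
      rw [Finset.card_product, Nat.card_Icc, Nat.card_Icc, min_mul_max]
      congr 1 <;> omega
    calc (((Finset.Icc (e pq (k - 1) + 1) (e pq k) ×ˢ
          Finset.Icc (e pq k + 1) (e pq (k + 1))).filter
        (fun nn => ∑ i ∈ Finset.Icc nn.1 nn.2, g i < a)).card : ℝ)
        ≤ (((min (e pq k - e pq (k - 1)) (e pq (k + 1) - e pq k))
          * (max (e pq k - e pq (k - 1)) (e pq (k + 1) - e pq k)) : ℕ) : ℝ) := by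
          exact_mod_cast le_of_le_of_eq h1 h2
      _ = _ := by push_cast; ring
  have hLHS : ∑ pq ∈ maximalIntervals g N, ∑ k ∈ Finset.Icc 1 (r pq - 1),
      (((Finset.Icc (e pq (k - 1) + 1) (e pq k) ×ˢ
          Finset.Icc (e pq k + 1) (e pq (k + 1))).filter
        (fun nn => ∑ i ∈ Finset.Icc nn.1 nn.2, g i < a)).card : ℝ)
      ≤ ∑ x ∈ Ω, (((min (e x.1 x.2 - e x.1 (x.2 - 1)) (e x.1 (x.2 + 1) - e x.1 x.2) : ℕ) : ℝ)
          * ((max (e x.1 x.2 - e x.1 (x.2 - 1)) (e x.1 (x.2 + 1) - e x.1 x.2) : ℕ) : ℝ)) := by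
    rw [hΩ, Finset.sum_sigma]
    exact Finset.sum_le_sum (fun pq hpq => Finset.sum_le_sum (fun k hk => hAx pq hpq k hk))
  have hCS := Finset.sum_mul_sq_le_sq_mul_sq Ω
    (fun x => ((min (e x.1 x.2 - e x.1 (x.2 - 1)) (e x.1 (x.2 + 1) - e x.1 x.2) : ℕ) : ℝ))
    (fun x => ((max (e x.1 x.2 - e x.1 (x.2 - 1)) (e x.1 (x.2 + 1) - e x.1 x.2) : ℕ) : ℝ))
  have hMQ : ∑ x ∈ Ω, ((max (e x.1 x.2 - e x.1 (x.2 - 1)) (e x.1 (x.2 + 1) - e x.1 x.2) : ℕ) : ℝ)^2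
      ≤ 2 * ∑ pq ∈ maximalIntervals g N, ∑ k ∈ Finset.Icc 1 (r pq),
          ((e pq k - e pq (k - 1) : ℕ) : ℝ)^2 := by
    rw [hΩ, Finset.sum_sigma, Finset.mul_sum]
    apply Finset.sum_le_sum
    intro pq hpq
    have hr1 := (hre pq hpq).1
    have hstep : ∀ k ∈ Finset.Icc 1 (r pq - 1),
        ((max (e pq k - e pq (k - 1)) (e pq (k + 1) - e pq k) : ℕ) : ℝ)^2
        ≤ ((e pq k - e pq (k - 1) : ℕ) : ℝ)^2 + ((e pq (k + 1) - e pq k : ℕ) : ℝ)^2 := by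
      intro k _
      rcases le_total (e pq k - e pq (k - 1)) (e pq (k + 1) - e pq k) with hc | hc
      · rw [max_eq_right hc]
        nlinarith [sq_nonneg (((e pq k - e pq (k - 1) : ℕ)) : ℝ)]
      · rw [max_eq_left hc]
        nlinarith [sq_nonneg (((e pq (k + 1) - e pq k : ℕ)) : ℝ)]
    calc ∑ k ∈ Finset.Icc 1 (r pq - 1),
          ((max (e pq k - e pq (k - 1)) (e pq (k + 1) - e pq k) : ℕ) : ℝ)^2
        ≤ ∑ k ∈ Finset.Icc 1 (r pq - 1), (((e pq k - e pq (k - 1) : ℕ) : ℝ)^2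
            + ((e pq (k + 1) - e pq k : ℕ) : ℝ)^2) := Finset.sum_le_sum hstep
      _ = ∑ k ∈ Finset.Icc 1 (r pq - 1), ((e pq k - e pq (k - 1) : ℕ) : ℝ)^2
          + ∑ k ∈ Finset.Icc 1 (r pq - 1), ((e pq (k + 1) - e pq k : ℕ) : ℝ)^2 :=
          Finset.sum_add_distrib
      _ ≤ 2 * ∑ k ∈ Finset.Icc 1 (r pq), ((e pq k - e pq (k - 1) : ℕ) : ℝ)^2 := by
          have h1 : ∑ k ∈ Finset.Icc 1 (r pq - 1), ((e pq k - e pq (k - 1) : ℕ) : ℝ)^2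
              ≤ ∑ k ∈ Finset.Icc 1 (r pq), ((e pq k - e pq (k - 1) : ℕ) : ℝ)^2 :=
            Finset.sum_le_sum_of_subset_of_nonneg
              (Finset.Icc_subset_Icc le_rfl (by omega)) (fun _ _ _ => sq_nonneg _)
          have hmap : ∑ k ∈ Finset.Icc 1 (r pq - 1), ((e pq (k + 1) - e pq k : ℕ) : ℝ)^2
              = ∑ k ∈ Finset.Icc 2 (r pq), ((e pq k - e pq (k - 1) : ℕ) : ℝ)^2 := by
            rw [show Finset.Icc 2 (r pq) = (Finset.Icc 1 (r pq - 1)).map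
                (addRightEmbedding 1) from ?_]
            · rw [Finset.sum_map]
              apply Finset.sum_congr rfl
              intro k _
              simp [addRightEmbedding]
            · rw [Finset.map_add_right_Icc]
              congr 1
              omega
          have h2 : ∑ k ∈ Finset.Icc 1 (r pq - 1), ((e pq (k + 1) - e pq k : ℕ) : ℝ)^2
              ≤ ∑ k ∈ Finset.Icc 1 (r pq), ((e pq k - e pq (k - 1) : ℕ) : ℝ)^2 := by
            rw [hmap]
            exact Finset.sum_le_sum_of_subset_of_nonneg
              (Finset.Icc_subset_Icc (by omega) le_rfl) (fun _ _ _ => sq_nonneg _)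
          linarith
  -- sqrt assembly
  set Q : ℝ := ∑ pq ∈ maximalIntervals g N, ∑ k ∈ Finset.Icc 1 (r pq),
      ((e pq k - e pq (k - 1) : ℕ) : ℝ)^2 with hQ
  have hQ0 : 0 ≤ Q := by
    rw [hQ]
    exact Finset.sum_nonneg (fun pq _ => Finset.sum_nonneg (fun k _ => sq_nonneg _))
  have hmM0 : 0 ≤ ∑ x ∈ Ω,
      (((min (e x.1 x.2 - e x.1 (x.2 - 1)) (e x.1 (x.2 + 1) - e x.1 x.2) : ℕ) : ℝ)
        * ((max (e x.1 x.2 - e x.1 (x.2 - 1)) (e x.1 (x.2 + 1) - e x.1 x.2) : ℕ) : ℝ)) :=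
    Finset.sum_nonneg (fun x _ => mul_nonneg (Nat.cast_nonneg _) (Nat.cast_nonneg _))
  have hm20 : 0 ≤ ∑ x ∈ Ω,
      ((min (e x.1 x.2 - e x.1 (x.2 - 1)) (e x.1 (x.2 + 1) - e x.1 x.2) : ℕ) : ℝ)^2 :=
    Finset.sum_nonneg (fun x _ => sq_nonneg _)
  have hsqrt : ∑ x ∈ Ω,
      (((min (e x.1 x.2 - e x.1 (x.2 - 1)) (e x.1 (x.2 + 1) - e x.1 x.2) : ℕ) : ℝ)
        * ((max (e x.1 x.2 - e x.1 (x.2 - 1)) (e x.1 (x.2 + 1) - e x.1 x.2) : ℕ) : ℝ))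
      ≤ Real.sqrt (∑ x ∈ Ω,
          ((min (e x.1 x.2 - e x.1 (x.2 - 1)) (e x.1 (x.2 + 1) - e x.1 x.2) : ℕ) : ℝ)^2)
        * Real.sqrt (∑ x ∈ Ω,
          ((max (e x.1 x.2 - e x.1 (x.2 - 1)) (e x.1 (x.2 + 1) - e x.1 x.2) : ℕ) : ℝ)^2) := by
    rw [← Real.sqrt_mul hm20]
    calc ∑ x ∈ Ω, (((min (e x.1 x.2 - e x.1 (x.2 - 1)) (e x.1 (x.2 + 1) - e x.1 x.2) : ℕ) : ℝ)
          * ((max (e x.1 x.2 - e x.1 (x.2 - 1)) (e x.1 (x.2 + 1) - e x.1 x.2) : ℕ) : ℝ))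
        = Real.sqrt ((∑ x ∈ Ω,
            (((min (e x.1 x.2 - e x.1 (x.2 - 1)) (e x.1 (x.2 + 1) - e x.1 x.2) : ℕ) : ℝ)
            * ((max (e x.1 x.2 - e x.1 (x.2 - 1)) (e x.1 (x.2 + 1) - e x.1 x.2) : ℕ) : ℝ)))^2)
          := (Real.sqrt_sq hmM0).symm
      _ ≤ _ := Real.sqrt_le_sqrt hCS
  have hs1 : Real.sqrt (∑ x ∈ Ω,
      ((min (e x.1 x.2 - e x.1 (x.2 - 1)) (e x.1 (x.2 + 1) - e x.1 x.2) : ℕ) : ℝ)^2)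
      ≤ 2 * ε ^ ((1:ℝ)/4) * Real.sqrt N := by
    have e1 : (4:ℝ) * u * (N:ℝ) = (2 * Real.sqrt u)^2 * (N:ℝ) := by
      rw [mul_pow, Real.sq_sqrt hu0]; ring
    have e2 : Real.sqrt u = ε ^ ((1:ℝ)/4) := by
      rw [hu, Real.sqrt_eq_rpow, Real.sqrt_eq_rpow, ← Real.rpow_mul hε0.le]
      norm_num
    calc Real.sqrt (∑ x ∈ Ω,
        ((min (e x.1 x.2 - e x.1 (x.2 - 1)) (e x.1 (x.2 + 1) - e x.1 x.2) : ℕ) : ℝ)^2)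
        ≤ Real.sqrt (4 * u * (N:ℝ)) := Real.sqrt_le_sqrt hm2T
      _ = 2 * ε ^ ((1:ℝ)/4) * Real.sqrt N := by
          rw [e1, Real.sqrt_mul (by positivity), Real.sqrt_sq (by positivity), e2]
  have hs2 : Real.sqrt (∑ x ∈ Ω,
      ((max (e x.1 x.2 - e x.1 (x.2 - 1)) (e x.1 (x.2 + 1) - e x.1 x.2) : ℕ) : ℝ)^2)
      ≤ Real.sqrt 2 * Real.sqrt Q := by
    rw [← Real.sqrt_mul (by norm_num : (0:ℝ) ≤ 2)]
    exact Real.sqrt_le_sqrt hMQ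
  calc ∑ pq ∈ maximalIntervals g N, ∑ k ∈ Finset.Icc 1 (r pq - 1),
      (((Finset.Icc (e pq (k - 1) + 1) (e pq k) ×ˢ
          Finset.Icc (e pq k + 1) (e pq (k + 1))).filter
        (fun nn => ∑ i ∈ Finset.Icc nn.1 nn.2, g i < a)).card : ℝ)
      ≤ ∑ x ∈ Ω, (((min (e x.1 x.2 - e x.1 (x.2 - 1)) (e x.1 (x.2 + 1) - e x.1 x.2) : ℕ) : ℝ)
          * ((max (e x.1 x.2 - e x.1 (x.2 - 1)) (e x.1 (x.2 + 1) - e x.1 x.2) : ℕ) : ℝ)) := hLHS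
    _ ≤ Real.sqrt (∑ x ∈ Ω,
          ((min (e x.1 x.2 - e x.1 (x.2 - 1)) (e x.1 (x.2 + 1) - e x.1 x.2) : ℕ) : ℝ)^2)
        * Real.sqrt (∑ x ∈ Ω,
          ((max (e x.1 x.2 - e x.1 (x.2 - 1)) (e x.1 (x.2 + 1) - e x.1 x.2) : ℕ) : ℝ)^2) := hsqrt
    _ ≤ (2 * ε ^ ((1:ℝ)/4) * Real.sqrt N) * (Real.sqrt 2 * Real.sqrt Q) := by
        apply mul_le_mul hs1 hs2 (Real.sqrt_nonneg _) (by positivity)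
    _ = 2 * Real.sqrt 2 * ε ^ ((1:ℝ)/4) * Real.sqrt Q * Real.sqrt N := by ring
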